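/- Constant-ξ profiles are Nash equilibria of the unconstrained game. Suppose the power profile ρ : Fin K → ℝ has all entries positive and there is a constant c > 0 with ξ k = ρ k * (b k)^α = c for every user k. Then for every user k and every x > 0, μ_k(ρ) ≤ μ_k(Function.update ρ k x); in particular (taking α = 0 and ρ k = P_max for all k), when α = 0 the full-power profile is a Nash equilibrium and no user has an incentive to deviate. -/

import Mathlib

/-- ξ k = ρ k * (b k)^α -/
noncomputable def xi (K : ℕ) (α : ℝ) (b ρ : Fin K → ℝ) (k : Fin K) : ℝ :=
  ρ k * b k ^ α

/-- Payoff of user k: μ_k(ρ) = (Σ_{i ≠ k} ξ i) / ξ k + ξ k * Σ_{i ≠ k} 1 / ξ i -/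
noncomputable def mu (K : ℕ) (α : ℝ) (b ρ : Fin K → ℝ) (k : Fin K) : ℝ :=
  (∑ i ∈ Finset.univ.erase k, xi K α b ρ i) / xi K α b ρ k
    + xi K α b ρ k * ∑ i ∈ Finset.univ.erase k, 1 / xi K α b ρ i

/-- Potential function u(ρ) = (1/2) * Σ_k μ_k(ρ) -/
noncomputable def potential (K : ℕ) (α : ℝ) (b ρ : Fin K → ℝ) : ℝ :=
  (1 / 2) * ∑ k, mu K α b ρ k

lemma two_le_div_add_div {c t : ℝ} (hc : 0 < c) (ht : 0 < t) :
    2 ≤ c / t + t / c := by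
  rw [div_add_div _ _ ht.ne' hc.ne', le_div_iff₀ (by positivity)]
  nlinarith [sq_nonneg (c - t)]

lemma aux_nash (K : ℕ) (α : ℝ) (b : Fin K → ℝ)
    (hb : ∀ k, 0 < b k) (ρ : Fin K → ℝ)
    (c : ℝ) (hc : 0 < c) (hconst : ∀ k, xi K α b ρ k = c) :
    ∀ (k : Fin K), ∀ x : ℝ, 0 < x →
      mu K α b ρ k ≤ mu K α b (Function.update ρ k x) k := by
  intro k x hx
  set t : ℝ := x * b k ^ α with ht_def
  have hbk := Real.rpow_pos_of_pos (hb k) α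
  have ht : 0 < t := mul_pos hx hbk
  have hupd : ∀ i ∈ Finset.univ.erase k, xi K α b (Function.update ρ k x) i = c := by
    intro i hi
    have hik : i ≠ k := Finset.ne_of_mem_erase hi
    simp [xi, Function.update_of_ne hik, ← hconst i, xi]
  have hupdk : xi K α b (Function.update ρ k x) k = t := by
    simp [xi, Function.update_self, ht_def]
  have hsum1 : (∑ i ∈ Finset.univ.erase k, xi K α b (Function.update ρ k x) i)
      = (K - 1 : ℕ) * c := by
    rw [Finset.sum_congr rfl hupd, Finset.sum_const, nsmul_eq_mul]
    simp [Finset.card_erase_of_mem]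
  have hsum2 : (∑ i ∈ Finset.univ.erase k, 1 / xi K α b (Function.update ρ k x) i)
      = (K - 1 : ℕ) * (1 / c) := by
    rw [Finset.sum_congr rfl (fun i hi => by rw [hupd i hi]), Finset.sum_const,
      nsmul_eq_mul]
    simp [Finset.card_erase_of_mem]
  have hsum1' : (∑ i ∈ Finset.univ.erase k, xi K α b ρ i) = (K - 1 : ℕ) * c := by
    rw [Finset.sum_congr rfl (fun i _ => hconst i), Finset.sum_const, nsmul_eq_mul]
    simp [Finset.card_erase_of_mem]
  have hsum2' : (∑ i ∈ Finset.univ.erase k, 1 / xi K α b ρ i)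
      = (K - 1 : ℕ) * (1 / c) := by
    rw [Finset.sum_congr rfl (fun i _ => by rw [hconst i]), Finset.sum_const,
      nsmul_eq_mul]
    simp [Finset.card_erase_of_mem]
  rw [mu, mu, hsum1, hsum2, hsum1', hsum2', hupdk, hconst k]
  set n : ℝ := ((K - 1 : ℕ) : ℝ)
  have hn : 0 ≤ n := Nat.cast_nonneg _
  have hlhs : n * c / c + c * (n * (1 / c)) = 2 * n := by
    field_simp; ring
  have hrhs : n * c / t + t * (n * (1 / c)) = n * (c / t + t / c) := by
    field_simp
  rw [hlhs, hrhs]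
  have := two_le_div_add_div hc ht
  nlinarith

/-- Constant-ξ profiles are Nash equilibria of the unconstrained game; in
    particular, when α = 0 the full-power profile is a Nash equilibrium. -/
theorem constant_xi_is_nash (K : ℕ) (hK : 2 ≤ K) (α : ℝ) (b : Fin K → ℝ)
    (hb : ∀ k, 0 < b k) (ρ : Fin K → ℝ) (hρ : ∀ k, 0 < ρ k)
    (c : ℝ) (hc : 0 < c) (hconst : ∀ k, xi K α b ρ k = c) :
    (∀ (k : Fin K), ∀ x : ℝ, 0 < x →
      mu K α b ρ k ≤ mu K α b (Function.update ρ k x) k) ∧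
    (∀ Pmax : ℝ, 0 < Pmax → ∀ (k : Fin K), ∀ x : ℝ, 0 < x →
      mu K 0 b (fun _ => Pmax) k
        ≤ mu K 0 b (Function.update (fun _ => Pmax) k x) k) := by
  constructor
  · exact aux_nash K α b hb ρ c hc hconst
  · intro Pmax hP
    exact aux_nash K 0 b hb (fun _ => Pmax) Pmax hP (fun k => by simp [xi])
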